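/- Let k ≥ 2 and let F be a k-chromatic graph such that deleting any single vertex of F leaves a graph that is still k-chromatic (i.e., F has no color-critical vertex). Let T'_{k-1}(n) be obtained from the Turán graph T_{k-1}(n) by choosing a vertex v in a largest part and joining v to every other vertex. Then T'_{k-1}(n) is F-free. -/

import Mathlib

/-- `T'_{k-1}(n)`: the Turán graph `T_{k-1}(n)` (in Mathlib's form, parts are residue classes
mod `k-1`, and the residue class of `0` is a largest part) together with all edges from the
vertex `0` to every other vertex. -/
def turanPlus (n k : ℕ) : SimpleGraph (Fin n) where
  Adj x y := x ≠ y ∧ ((x : ℕ) % (k - 1) ≠ (y : ℕ) % (k - 1) ∨ (x : ℕ) = 0 ∨ (y : ℕ) = 0)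
  symm := ⟨by tauto⟩
  loopless := ⟨by tauto⟩

/-- If `F` is `k`-chromatic and has no color-critical vertex (deleting any vertex leaves a
`k`-chromatic graph), then `T'_{k-1}(n)` is `F`-free. -/
theorem stmt_2 {W : Type*} [Fintype W] (F : SimpleGraph W) (k n : ℕ) (hk : 2 ≤ k)
    (hχ : F.chromaticNumber = (k : ℕ∞))
    (hnocrit : ∀ v : W, (F.induce {v}ᶜ).chromaticNumber = (k : ℕ∞)) :
    ¬ ∃ f : F →g turanPlus n k, Function.Injective f := by
  rintro ⟨f, hf⟩
  have hk1 : 0 < k - 1 := by omega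
  have hcontra : ¬ ((k : ℕ∞) ≤ (k - 1 : ℕ)) := by
    simp only [Nat.cast_le]
    omega
  by_cases h0 : ∃ w, ((f w : Fin n) : ℕ) = 0
  · obtain ⟨w0, hw0⟩ := h0
    have hcol : (F.induce {w0}ᶜ).Colorable (k - 1) := by
      refine ⟨SimpleGraph.Coloring.mk
        (fun w => ⟨((f w.1 : Fin n) : ℕ) % (k - 1), Nat.mod_lt _ hk1⟩) ?_⟩
      rintro ⟨a, ha⟩ ⟨b, hb⟩ hab hceq
      have hadj : F.Adj a b := hab
      have := (f.map_adj hadj).2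
      have hfa : ((f a : Fin n) : ℕ) ≠ 0 := by
        intro h
        apply ha
        have : f a = f w0 := Fin.ext (by omega)
        simp [hf this]
      have hfb : ((f b : Fin n) : ℕ) ≠ 0 := by
        intro h
        apply hb
        have : f b = f w0 := Fin.ext (by omega)
        simp [hf this]
      have hmod : ((f a : Fin n) : ℕ) % (k - 1) ≠ ((f b : Fin n) : ℕ) % (k - 1) := by
        tauto
      exact hmod (congrArg Fin.val hceq)
    exact hcontra ((hnocrit w0) ▸ hcol.chromaticNumber_le)
  · push_neg at h0
    have hcol : F.Colorable (k - 1) := by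
      refine ⟨SimpleGraph.Coloring.mk
        (fun w => ⟨((f w : Fin n) : ℕ) % (k - 1), Nat.mod_lt _ hk1⟩) ?_⟩
      intro a b hab hceq
      have := (f.map_adj hab).2
      have hmod : ((f a : Fin n) : ℕ) % (k - 1) ≠ ((f b : Fin n) : ℕ) % (k - 1) := by
        have := h0 a; have := h0 b; tauto
      exact hmod (congrArg Fin.val hceq)
    exact hcontra (hχ ▸ hcol.chromaticNumber_le)
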